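/- Let x and y be quaternions with zero real part and norm one (i.e. purely imaginary unit quaternions, which correspond to the trace-free elements of SU(2)). Then the braid relation x*y*x = y*x*y holds if and only if either x = y, or the real inner product of x and y equals -1/2 (equivalently Re(x * conj(y)) = -1/2, i.e. the corresponding points of the unit 2-sphere of imaginary quaternions make angle 2π/3). -/

import Mathlib

/-- For purely imaginary unit quaternions `x` and `y` (the trace-free elements of `SU(2)`),
the braid relation `x * y * x = y * x * y` holds if and only if `x = y` or the real inner
product `Re (x * conj y)` equals `-1/2`. -/
theorem braid_relation_imaginary_unit_quaternions
    (x y : Quaternion ℝ) (hx : x.re = 0) (hy : y.re = 0)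
    (hnx : ‖x‖ = 1) (hny : ‖y‖ = 1) :
    x * y * x = y * x * y ↔ x = y ∨ (x * star y).re = -(1 / 2) := by
  have hx1 : x.imI ^ 2 + x.imJ ^ 2 + x.imK ^ 2 = 1 := by
    have h := Quaternion.normSq_eq_norm_mul_self x
    rw [hnx, Quaternion.normSq_def'] at h
    rw [hx] at h; nlinarith [h]
  have hy1 : y.imI ^ 2 + y.imJ ^ 2 + y.imK ^ 2 = 1 := by
    have h := Quaternion.normSq_eq_norm_mul_self y
    rw [hny, Quaternion.normSq_def'] at h
    rw [hy] at h; nlinarith [h]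
  set a := x.imI with ha0; set b := x.imJ with hb0; set c := x.imK with hc0
  set d := y.imI with hd0; set e := y.imJ with he0; set f := y.imK with hf0
  have hre : (x * star y).re
      = a * d + b * e + c * f := by
    simp [Quaternion.re_mul, Quaternion.re_star, Quaternion.imI_star, Quaternion.imJ_star, Quaternion.imK_star, hx, hy, ← ha0, ← hb0, ← hc0, ← hd0, ← he0, ← hf0]
  rw [hre]
  set t : ℝ := a * d + b * e + c * f with ht
  constructor
  · intro h
    have h1 := congrArg QuaternionAlgebra.imI h
    have h2 := congrArg QuaternionAlgebra.imJ h
    have h3 := congrArg QuaternionAlgebra.imK h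
    simp only [Quaternion.imI_mul, Quaternion.imJ_mul, Quaternion.imK_mul,
      Quaternion.re_mul, hx, hy, ← ha0, ← hb0, ← hc0, ← hd0, ← he0, ← hf0] at h1 h2 h3
    have e1 : (1 + 2 * t) * (d - a) = 0 := by linear_combination h1 - d * hx1 + a * hy1
    have e2 : (1 + 2 * t) * (e - b) = 0 := by linear_combination h2 - e * hx1 + b * hy1
    have e3 : (1 + 2 * t) * (f - c) = 0 := by linear_combination h3 - f * hx1 + c * hy1
    by_cases hT : (1 : ℝ) + 2 * t = 0
    · right; linarith
    · left
      have ha : d = a := by rcases mul_eq_zero.1 e1 with h' | h'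
                            · exact absurd h' hT
                            · linarith
      have hb : e = b := by rcases mul_eq_zero.1 e2 with h' | h'
                            · exact absurd h' hT
                            · linarith
      have hc : f = c := by rcases mul_eq_zero.1 e3 with h' | h'
                            · exact absurd h' hT
                            · linarith
      simp [Quaternion.ext_iff, ha, hb, hc, hx, hy, ← ha0, ← hb0, ← hc0, ← hd0, ← he0, ← hf0]
  · rintro (h | h)
    · rw [h]
    · rw [ht] at h
      ext
      · simp only [Quaternion.re_mul, Quaternion.imI_mul, Quaternion.imJ_mul,
          Quaternion.imK_mul, hx, hy, ← ha0, ← hb0, ← hc0, ← hd0, ← he0, ← hf0]; ring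
      · simp only [Quaternion.re_mul, Quaternion.imI_mul, Quaternion.imJ_mul,
          Quaternion.imK_mul, hx, hy, ← ha0, ← hb0, ← hc0, ← hd0, ← he0, ← hf0]
        linear_combination d * hx1 - a * hy1 + (2 * d - 2 * a) * h
      · simp only [Quaternion.re_mul, Quaternion.imI_mul, Quaternion.imJ_mul,
          Quaternion.imK_mul, hx, hy, ← ha0, ← hb0, ← hc0, ← hd0, ← he0, ← hf0]
        linear_combination e * hx1 - b * hy1 + (2 * e - 2 * b) * h
      · simp only [Quaternion.re_mul, Quaternion.imI_mul, Quaternion.imJ_mul,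
          Quaternion.imK_mul, hx, hy, ← ha0, ← hb0, ← hc0, ← hd0, ← he0, ← hf0]
        linear_combination f * hx1 - c * hy1 + (2 * f - 2 * c) * h
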